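/- Let (X, L_X) and (Y, L_Y) be compact quantum metric spaces, Z an order unit space, and T : Z → X, S : Z → Y linear maps such that the map z ↦ (T z, S z) is a norm-homeomorphism onto its image and L(z) := L_X(T z) + L_Y(S z) vanishes exactly on ℝe. If a sequence (z_n) in { z : ‖z‖ ≤ 1, L(z) ≤ 1 } is such that both (T z_n) and (S z_n) admit norm-convergent subsequences, then (z_n) admits a norm-convergent subsequence; consequently the unit ball { z : ‖z‖ ≤ 1, L(z) ≤ 1 } is totally bounded. -/

import Mathlib

open Filter

open UniformSpace in
/-- Every sequence in a totally bounded subset of a metric space has a Cauchy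
subsequence. -/
lemma exists_cauchy_subseq_of_totallyBounded {E : Type*} [MetricSpace E]
    {s : Set E} (hs : TotallyBounded s) (u : ℕ → E) (hu : ∀ n, u n ∈ s) :
    ∃ φ : ℕ → ℕ, StrictMono φ ∧ CauchySeq (u ∘ φ) := by
  set v : ℕ → Completion E := fun n => (u n : Completion E)
  have hTB : TotallyBounded (closure (((↑) : E → Completion E) '' s)) :=
    (hs.image (Completion.coe_isometry.uniformContinuous)).closure
  have hK : IsCompact (closure (((↑) : E → Completion E) '' s)) :=
    hTB.isCompact_of_isClosed isClosed_closure
  have hv : ∀ n, v n ∈ closure (((↑) : E → Completion E) '' s) := fun n =>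
    subset_closure ⟨u n, hu n, rfl⟩
  obtain ⟨l, -, φ, hφ, hlim⟩ := hK.tendsto_subseq hv
  refine ⟨φ, hφ, ?_⟩
  have hc : CauchySeq (v ∘ φ) := hlim.cauchySeq
  rw [Metric.cauchySeq_iff] at hc ⊢
  intro ε hε
  obtain ⟨N, hN⟩ := hc ε hε
  refine ⟨N, fun m hm n hn => ?_⟩
  have := hN m hm n hn
  simpa [v, Function.comp, Completion.dist_eq] using this

/-- A scaled Lip/norm ball is totally bounded. -/
lemma totallyBounded_scaled_ball {X : Type*} [NormedAddCommGroup X] [NormedSpace ℝ X]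
    (LX : X → ℝ) (hLXnonneg : ∀ x, 0 ≤ LX x)
    (hLXhom : ∀ (t : ℝ) (x : X), LX (t • x) = |t| * LX x)
    (hTBX : TotallyBounded {x : X | LX x ≤ 1 ∧ ‖x‖ ≤ 1}) (C : ℝ) (hC : 1 ≤ C) :
    TotallyBounded {x : X | LX x ≤ 1 ∧ ‖x‖ ≤ C} := by
  have hC0 : (0:ℝ) < C := lt_of_lt_of_le one_pos hC
  have himg : TotallyBounded ((fun x : X => C • x) '' {x : X | LX x ≤ 1 ∧ ‖x‖ ≤ 1}) :=
    hTBX.image ((C • ContinuousLinearMap.id ℝ X).uniformContinuous)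
  refine TotallyBounded.subset ?_ himg
  rintro x ⟨hL, hn⟩
  refine ⟨C⁻¹ • x, ⟨?_, ?_⟩, ?_⟩
  · rw [hLXhom]
    have : |C⁻¹| ≤ 1 := by
      rw [abs_of_nonneg (inv_nonneg.2 hC0.le)]
      exact inv_le_one_of_one_le₀ hC
    exact mul_le_one₀ this (hLXnonneg x) hL
  · rw [norm_smul, norm_inv, Real.norm_of_nonneg hC0.le]
    calc C⁻¹ * ‖x‖ ≤ C⁻¹ * C := by
          exact mul_le_mul_of_nonneg_left hn (inv_nonneg.2 hC0.le)
      _ = 1 := inv_mul_cancel₀ hC0.ne'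
  · simp [smul_smul, mul_inv_cancel₀ hC0.ne']


/- STATEMENT 12 (abstract Step (iii)): Let (X, L_X), (Y, L_Y) be compact quantum
   metric spaces, Z an order unit space, T : Z → X, S : Z → Y linear maps such that
   z ↦ (Tz, Sz) is a norm-homeomorphism onto its image, and
   L(z) = L_X(Tz) + L_Y(Sz) vanishes exactly on ℝe.  If a sequence in the unit
   Lip/norm ball is such that both image sequences admit norm-convergent
   subsequences, then so does the sequence itself; consequently the unit Lip/norm
   ball is totally bounded. -/
theorem totallyBounded_of_direct_sum_decomposition
    {X Y Z : Type*}
    [NormedAddCommGroup X] [NormedSpace ℝ X]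
    [NormedAddCommGroup Y] [NormedSpace ℝ Y]
    [NormedAddCommGroup Z] [NormedSpace ℝ Z] [CompleteSpace Z]
    [PartialOrder Z]
    -- Z is an order unit space with order unit e
    (e : Z)
    (horder : ∀ z : Z, ∃ r : ℝ, z ≤ r • e)
    (harch : ∀ z : Z, (∀ r : ℝ, 0 ≤ r → z ≤ r • e) → z ≤ 0)
    -- Lip norms of the CQMS X and Y
    (LX : X → ℝ) (hLXnonneg : ∀ x, 0 ≤ LX x)
    (hLXhom : ∀ (t : ℝ) (x : X), LX (t • x) = |t| * LX x)
    (hLXtri : ∀ x x' : X, LX (x + x') ≤ LX x + LX x')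
    (LY : Y → ℝ) (hLYnonneg : ∀ y, 0 ≤ LY y)
    (hLYhom : ∀ (t : ℝ) (y : Y), LY (t • y) = |t| * LY y)
    (hLYtri : ∀ y y' : Y, LY (y + y') ≤ LY y + LY y')
    -- X and Y are compact quantum metric spaces (Rieffel's criterion)
    (hTBX : TotallyBounded {x : X | LX x ≤ 1 ∧ ‖x‖ ≤ 1})
    (hTBY : TotallyBounded {y : Y | LY y ≤ 1 ∧ ‖y‖ ≤ 1})
    -- the linear maps T and S
    (T : Z →L[ℝ] X) (S : Z →L[ℝ] Y)
    -- z ↦ (Tz, Sz) is a norm-homeomorphism onto its image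
    (hinj : ∀ ε > 0, ∃ δ > 0, ∀ z : Z, ‖T z‖ + ‖S z‖ ≤ δ → ‖z‖ ≤ ε)
    -- L vanishes exactly on ℝe
    (hL0 : ∀ z : Z, (LX (T z) + LY (S z) = 0 ↔ ∃ t : ℝ, z = t • e)) :
    -- subsequence extraction
    (∀ z : ℕ → Z,
      (∀ n, ‖z n‖ ≤ 1 ∧ LX (T (z n)) + LY (S (z n)) ≤ 1) →
      (∃ φ : ℕ → ℕ, StrictMono φ ∧ ∃ x : X, Tendsto (fun n => T (z (φ n))) atTop (nhds x)) →
      (∃ ψ : ℕ → ℕ, StrictMono ψ ∧ ∃ y : Y, Tendsto (fun n => S (z (ψ n))) atTop (nhds y)) →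
      ∃ θ : ℕ → ℕ, StrictMono θ ∧ ∃ l : Z, Tendsto (fun n => z (θ n)) atTop (nhds l)) ∧
    -- consequently the unit Lip/norm ball is totally bounded
    TotallyBounded {z : Z | ‖z‖ ≤ 1 ∧ LX (T z) + LY (S z) ≤ 1} := by

  have hTBX' : TotallyBounded {x : X | LX x ≤ 1 ∧ ‖x‖ ≤ max 1 ‖T‖} :=
    totallyBounded_scaled_ball LX hLXnonneg hLXhom hTBX _ (le_max_left _ _)
  have hTBY' : TotallyBounded {y : Y | LY y ≤ 1 ∧ ‖y‖ ≤ max 1 ‖S‖} :=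
    totallyBounded_scaled_ball LY hLYnonneg hLYhom hTBY _ (le_max_left _ _)
  have key : ∀ z : ℕ → Z,
      (∀ n, ‖z n‖ ≤ 1 ∧ LX (T (z n)) + LY (S (z n)) ≤ 1) →
      ∃ θ : ℕ → ℕ, StrictMono θ ∧ CauchySeq (z ∘ θ) := by
    intro z hz
    have hTmem : ∀ n, T (z n) ∈ {x : X | LX x ≤ 1 ∧ ‖x‖ ≤ max 1 ‖T‖} := fun n => by
      refine ⟨?_, ?_⟩
      · have := (hz n).2
        have h2 := hLYnonneg (S (z n))
        linarith
      · calc ‖T (z n)‖ ≤ ‖T‖ * ‖z n‖ := T.le_opNorm _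
          _ ≤ ‖T‖ * 1 := mul_le_mul_of_nonneg_left (hz n).1 (norm_nonneg _)
          _ ≤ max 1 ‖T‖ := by rw [mul_one]; exact le_max_right _ _
    obtain ⟨φ, hφ, hcT⟩ :=
      exists_cauchy_subseq_of_totallyBounded hTBX' (fun n => T (z n)) hTmem
    have hSmem : ∀ n, S (z (φ n)) ∈ {y : Y | LY y ≤ 1 ∧ ‖y‖ ≤ max 1 ‖S‖} := fun n => by
      refine ⟨?_, ?_⟩
      · have := (hz (φ n)).2
        have h2 := hLXnonneg (T (z (φ n)))
        linarith
      · calc ‖S (z (φ n))‖ ≤ ‖S‖ * ‖z (φ n)‖ := S.le_opNorm _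
          _ ≤ ‖S‖ * 1 := mul_le_mul_of_nonneg_left (hz (φ n)).1 (norm_nonneg _)
          _ ≤ max 1 ‖S‖ := by rw [mul_one]; exact le_max_right _ _
    obtain ⟨ψ, hψ, hcS⟩ :=
      exists_cauchy_subseq_of_totallyBounded hTBY' (fun n => S (z (φ n))) hSmem
    refine ⟨φ ∘ ψ, hφ.comp hψ, ?_⟩
    have hcT' : CauchySeq (fun n => T (z (φ (ψ n)))) :=
      hcT.comp_tendsto hψ.tendsto_atTop
    have hcS' : CauchySeq (fun n => S (z (φ (ψ n)))) := hcS
    rw [Metric.cauchySeq_iff]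
    intro ε hε
    obtain ⟨δ, hδ, hδ'⟩ := hinj (ε / 2) (by linarith)
    obtain ⟨N₁, hN₁⟩ := Metric.cauchySeq_iff.1 hcT' (δ / 2) (by linarith)
    obtain ⟨N₂, hN₂⟩ := Metric.cauchySeq_iff.1 hcS' (δ / 2) (by linarith)
    refine ⟨max N₁ N₂, fun m hm n hn => ?_⟩
    have h1 := hN₁ m (le_trans (le_max_left _ _) hm) n (le_trans (le_max_left _ _) hn)
    have h2 := hN₂ m (le_trans (le_max_right _ _) hm) n (le_trans (le_max_right _ _) hn)
    rw [dist_eq_norm] at h1 h2 ⊢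
    have hd : ‖T ((z ∘ (φ ∘ ψ)) m - (z ∘ (φ ∘ ψ)) n)‖ + ‖S ((z ∘ (φ ∘ ψ)) m - (z ∘ (φ ∘ ψ)) n)‖ ≤ δ := by
      rw [map_sub, map_sub]
      simp only [Function.comp] at h1 h2 ⊢
      linarith
    have := hδ' _ hd
    linarith
  constructor
  · intro z hz _ _
    obtain ⟨θ, hθ, hc⟩ := key z hz
    obtain ⟨l, hl⟩ := cauchySeq_tendsto_of_complete hc
    exact ⟨θ, hθ, l, hl⟩
  · set B : Set Z := {z : Z | ‖z‖ ≤ 1 ∧ LX (T z) + LY (S z) ≤ 1} with hB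
    have hseq : IsSeqCompact (closure B) := by
      intro u hu
      have hch : ∀ n : ℕ, ∃ w ∈ B, dist (u n) w < 1 / (n + 1) := fun n =>
        Metric.mem_closure_iff.1 (hu n) _ (by positivity)
      choose w hwB hwd using hch
      obtain ⟨θ, hθ, hc⟩ := key w (fun n => hwB n)
      obtain ⟨l, hl⟩ := cauchySeq_tendsto_of_complete hc
      refine ⟨l, mem_closure_of_tendsto hl (Eventually.of_forall fun n => hwB (θ n)), θ, hθ, ?_⟩
      have hd0 : Tendsto (fun n => dist (u (θ n)) (w (θ n))) atTop (nhds 0) := by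
        refine squeeze_zero (fun n => dist_nonneg) (fun n => (hwd (θ n)).le.trans ?_)
          tendsto_one_div_add_atTop_nhds_zero_nat
        have hnn : n ≤ θ n := hθ.le_apply
        have : (n : ℝ) + 1 ≤ (θ n : ℝ) + 1 := by exact_mod_cast Nat.add_le_add_right hnn 1
        exact one_div_le_one_div_of_le (by positivity) this
      have hd1 : Tendsto (fun n => dist ((w ∘ θ) n) l) atTop (nhds 0) :=
        tendsto_iff_dist_tendsto_zero.1 hl
      refine tendsto_iff_dist_tendsto_zero.2 ?_
      refine squeeze_zero (fun n => dist_nonneg)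
        (fun n => dist_triangle (u (θ n)) (w (θ n)) l) ?_
      simpa using hd0.add hd1
    exact TotallyBounded.subset subset_closure hseq.totallyBounded
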